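/- For α ∈ (0,1), λ ≥ 0, ν > 0, S > 0, t > 0 and any positive integer p, the series Σ over (k₁,…,k_p) ∈ ℕ^p of (S t^α)^{(Σk_i − 1)} ν^{Σk_i − 1}/Γ(α(Σk_i − 1) + 1) converges, being bounded by (S t^α ν)^{−1} E_{α,1−α}^{p}(S t^α ν) < ∞, where E^γ_{α,β}(z) = (1/Γ(γ)) Σ_{k≥0} Γ(γ+k) z^k/(k! Γ(αk+β)) is the three-parameter Mittag-Leffler function. -/

import Mathlib

open Finset


/-- factorial lower bound via exp -/
lemma aux_pow_le_factorial_mul_exp (x : ℝ) (hx : 0 ≤ x) (n : ℕ) :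
    x ^ n ≤ (n.factorial : ℝ) * Real.exp x := by
  have h1 : x ^ n / (n.factorial : ℝ) ≤ Real.exp x := by
    calc x ^ n / (n.factorial : ℝ)
        ≤ ∑ i ∈ range (n + 1), x ^ i / (i.factorial : ℝ) := by
          refine Finset.single_le_sum (f := fun i => x ^ i / (i.factorial : ℝ)) ?_ ?_
          · intro i _; positivity
          · exact self_mem_range_succ n
      _ ≤ Real.exp x := Real.sum_le_exp_of_nonneg hx _
  calc x ^ n = x ^ n / (n.factorial : ℝ) * (n.factorial : ℝ) := by
        field_simp
    _ ≤ Real.exp x * (n.factorial : ℝ) := by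
        have : (0:ℝ) < n.factorial := by positivity
        exact mul_le_mul_of_nonneg_right h1 this.le
    _ = (n.factorial : ℝ) * Real.exp x := by ring

/-- Gamma lower bound by factorial -/
lemma aux_factorial_le_Gamma (n : ℕ) (x : ℝ) (h : (n : ℝ) + 2 ≤ x) :
    ((n + 1).factorial : ℝ) ≤ Real.Gamma x := by
  have h2 : (2:ℝ) ≤ (n:ℝ) + 2 := by have : (0:ℝ) ≤ (n:ℝ) := Nat.cast_nonneg n; linarith
  have hmem1 : (n:ℝ) + 2 ∈ Set.Ici (2:ℝ) := h2
  have hmem2 : x ∈ Set.Ici (2:ℝ) := le_trans h2 h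
  have hmono := Real.Gamma_strictMonoOn_Ici.monotoneOn hmem1 hmem2 h
  have heq : Real.Gamma ((n:ℝ) + 2) = ((n+1).factorial : ℝ) := by
    have : ((n:ℝ) + 2) = ((n+1 : ℕ) : ℝ) + 1 := by push_cast; ring
    rw [this, Real.Gamma_nat_eq_factorial]
  rw [← heq]; exact hmono

lemma aux_factorial_le_pow_mul (j q : ℕ) :
    (j + q).factorial ≤ (j + q) ^ q * j.factorial := by
  induction q with
  | zero => simp
  | succ q ih =>
      have h1 : (j + (q+1)).factorial = (j + q + 1) * (j + q).factorial := by
        rw [show j + (q+1) = (j + q) + 1 by ring, Nat.factorial_succ]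
      rw [h1]
      calc (j + q + 1) * (j + q).factorial
          ≤ (j + q + 1) * ((j + q) ^ q * j.factorial) :=
            Nat.mul_le_mul_left _ ih
        _ ≤ (j + q + 1) * ((j + q + 1) ^ q * j.factorial) := by
            refine Nat.mul_le_mul_left _ (Nat.mul_le_mul_right _ ?_)
            exact Nat.pow_le_pow_left (Nat.le_succ _) q
        _ = (j + (q+1)) ^ (q+1) * j.factorial := by ring_nf


lemma aux_card_piAntidiag {ι : Type*} [DecidableEq ι] (s : Finset ι) (n : ℕ) :
    (s.piAntidiag n).card = (s.card + n - 1).choose n := by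
  induction s using Finset.cons_induction generalizing n with
  | empty =>
      rw [Finset.piAntidiag_empty]
      rcases n with _ | m
      · simp
      · simp [Nat.choose_eq_zero_of_lt (by omega : m < m + 1)]
  | cons i s hi ih =>
      rw [Finset.piAntidiag_cons hi, Finset.card_disjiUnion]
      simp only [Finset.card_map, ih]
      rw [Finset.Nat.sum_antidiagonal_eq_sum_range_succ
        (fun a b => (s.card + b - 1).choose b)]
      have hrefl := Finset.sum_range_reflect
        (fun b => (s.card + b - 1).choose b) (n + 1)
      simp only [Nat.add_sub_cancel] at hrefl
      rw [hrefl]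
      rw [Finset.card_cons]
      rcases hc : s.card with _ | d
      · rw [Finset.sum_eq_single 0]
        · simp
        · intro b _ hb
          exact Nat.choose_eq_zero_of_lt (by omega)
        · simp
      · have hterm : ∀ b ∈ range (n + 1),
            (d + 1 + b - 1).choose b = (d + b).choose d := by
          intro b _
          rw [show d + 1 + b - 1 = d + b by omega]
          rw [← Nat.choose_symm (by omega : d ≤ d + b),
            show d + b - d = b by omega]
        rw [Finset.sum_congr rfl hterm]
        have hicc : ∑ m ∈ Icc d (d + n), m.choose d = (d + n + 1).choose (d + 1) :=
          Nat.sum_Icc_choose _ _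
        rw [show Icc d (d + n) = Ico d (d + n + 1) by rw [Finset.Ico_add_one_right_eq_Icc],
          Finset.sum_Ico_eq_sum_range] at hicc
        simp only [show d + n + 1 - d = n + 1 by omega] at hicc
        rw [hicc, ← Nat.choose_symm (by omega : d + 1 ≤ d + n + 1),
          show d + n + 1 - (d + 1) = n by omega]
        congr 1
        omega

lemma aux_summable_B (α z : ℝ) (hα0 : 0 < α) (hα1 : α < 1) (hz : 0 < z)
    (p : ℕ) (hp : 1 ≤ p) :
    Summable (fun j : ℕ => Real.Gamma ((p : ℝ) + (j : ℝ)) * z ^ j /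
      ((j.factorial : ℝ) * Real.Gamma (α * (j : ℝ) + (1 - α)))) := by
  set B : ℕ → ℝ := fun j => Real.Gamma ((p : ℝ) + (j : ℝ)) * z ^ j /
      ((j.factorial : ℝ) * Real.Gamma (α * (j : ℝ) + (1 - α))) with hB
  set X : ℝ := max 1 ((2 * z) ^ (α⁻¹)) with hXdef
  have hX1 : (1:ℝ) ≤ X := le_max_left _ _
  have hXpos : (0:ℝ) < X := lt_of_lt_of_le one_pos hX1
  have hXα_pos : (0:ℝ) < X ^ α := Real.rpow_pos_of_pos hXpos α
  have hzX : 2 * z ≤ X ^ α := by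
    rcases le_total (2 * z) 1 with h | h
    · calc 2 * z ≤ 1 := h
        _ = 1 ^ α := (Real.one_rpow α).symm
        _ ≤ X ^ α := Real.rpow_le_rpow zero_le_one hX1 hα0.le
    · have h2z : (0:ℝ) ≤ 2 * z := by linarith
      have hle : (2 * z) ^ (α⁻¹) ≤ X := le_max_right _ _
      calc 2 * z = (2 * z) ^ (α⁻¹ * α) := by
            rw [inv_mul_cancel₀ hα0.ne', Real.rpow_one]
        _ = ((2 * z) ^ (α⁻¹)) ^ α := Real.rpow_mul h2z _ _
        _ ≤ X ^ α := Real.rpow_le_rpow (Real.rpow_nonneg h2z _) hle hα0.le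
  have hq : z / X ^ α ≤ 1 / 2 := by
    rw [div_le_div_iff₀ hXα_pos two_pos]; linarith
  have hq0 : 0 ≤ z / X ^ α := by positivity
  -- the dominating sequence
  set g : ℕ → ℝ := fun j => ((p : ℝ) + j) ^ p * (1/2 : ℝ) ^ j with hg
  have hgsum : Summable g := by
    have h1 : Summable (fun j : ℕ => (j : ℝ) ^ p * (1/2 : ℝ) ^ j) := by
      have : ‖(1/2 : ℝ)‖ < 1 := by rw [Real.norm_eq_abs]; rw [abs_of_pos (by norm_num)]; norm_num
      exact summable_pow_mul_geometric_of_norm_lt_one p this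
    have h2 : Summable (fun j : ℕ => ((j : ℝ) + 1) ^ p * (1/2 : ℝ) ^ j) := by
      have h3 := (summable_nat_add_iff 1).2 h1
      have h4 : Summable (fun j : ℕ => (2:ℝ) * (((j + 1 : ℕ) : ℝ) ^ p * (1/2 : ℝ) ^ (j + 1))) :=
        h3.mul_left 2
      refine h4.congr fun j => ?_
      push_cast
      rw [pow_succ]
      ring
    have h5 : Summable (fun j : ℕ => ((p:ℝ) + 1) ^ p * (((j : ℝ) + 1) ^ p * (1/2 : ℝ) ^ j)) :=
      h2.mul_left _
    refine Summable.of_nonneg_of_le (fun j => by positivity) (fun j => ?_) h5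
    have hbase : (p : ℝ) + j ≤ ((p:ℝ) + 1) * ((j:ℝ) + 1) := by
      have hj : (0:ℝ) ≤ (j:ℝ) := Nat.cast_nonneg j
      have hpp : (0:ℝ) ≤ (p:ℝ) := Nat.cast_nonneg p
      nlinarith
    calc ((p : ℝ) + j) ^ p * (1/2 : ℝ) ^ j
        ≤ (((p:ℝ) + 1) * ((j:ℝ) + 1)) ^ p * (1/2 : ℝ) ^ j := by
          refine mul_le_mul_of_nonneg_right ?_ (by positivity)
          exact pow_le_pow_left₀ (by positivity) hbase p
      _ = ((p:ℝ) + 1) ^ p * (((j : ℝ) + 1) ^ p * (1/2 : ℝ) ^ j) := by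
          rw [mul_pow]; ring
  -- eventual bound
  set C : ℝ := Real.exp X * X ^ 2 with hC
  have hbound : ∀ j : ℕ, (2:ℝ) ≤ α * j → B j ≤ C * g j := by
    intro j hαj
    have hj0 : (0:ℝ) ≤ (j:ℝ) := Nat.cast_nonneg j
    have hGpos : 0 < Real.Gamma (α * (j : ℝ) + (1 - α)) :=
      Real.Gamma_pos_of_pos (by nlinarith)
    -- floor
    set m : ℕ := ⌊α * (j:ℝ)⌋₊ with hm
    have hm2 : 2 ≤ m := Nat.le_floor (by exact_mod_cast hαj)
    have hfl : (m : ℝ) ≤ α * j := Nat.floor_le (by nlinarith)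
    have hfl2 : α * j < (m : ℝ) + 1 := Nat.lt_floor_add_one _
    set n : ℕ := m - 2 with hn
    have hn2 : (n : ℝ) + 2 = (m : ℝ) := by
      have : ((n + 2 : ℕ) : ℝ) = (m:ℝ) := by rw [show n + 2 = m by omega]
      push_cast at this; linarith
    -- Gamma lower bound
    have hgam : ((n + 1).factorial : ℝ) ≤ Real.Gamma (α * (j : ℝ) + (1 - α)) := by
      apply aux_factorial_le_Gamma
      rw [hn2]
      nlinarith
    -- factorial lower bound via exp
    have hfac : X ^ (α * (j:ℝ) - 2) ≤ ((n + 1).factorial : ℝ) * Real.exp X := by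
      calc X ^ (α * (j:ℝ) - 2)
          ≤ X ^ (((n + 1 : ℕ) : ℝ)) := by
            apply Real.rpow_le_rpow_of_exponent_le hX1
            push_cast; linarith
        _ = X ^ (n + 1) := Real.rpow_natCast X (n + 1)
        _ ≤ ((n + 1).factorial : ℝ) * Real.exp X :=
            aux_pow_le_factorial_mul_exp X hXpos.le (n + 1)
    have hGlow : X ^ (α * (j:ℝ) - 2) / Real.exp X ≤ Real.Gamma (α * (j : ℝ) + (1 - α)) := by
      rw [div_le_iff₀ (Real.exp_pos X)] at *
      calc X ^ (α * (j:ℝ) - 2) ≤ ((n + 1).factorial : ℝ) * Real.exp X := hfac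
        _ ≤ Real.Gamma (α * (j : ℝ) + (1 - α)) * Real.exp X :=
            mul_le_mul_of_nonneg_right hgam (Real.exp_pos X).le
    -- numerator Gamma
    have hnum : Real.Gamma ((p : ℝ) + (j : ℝ)) ≤ ((p:ℝ) + j) ^ p * (j.factorial : ℝ) := by
      have hcast : (p : ℝ) + (j : ℝ) = ((j + p - 1 : ℕ) : ℝ) + 1 := by
        rw [Nat.cast_sub (by omega : 1 ≤ j + p)]; push_cast; ring
      have hgval : Real.Gamma ((p : ℝ) + (j : ℝ)) = ((j + p - 1).factorial : ℝ) := by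
        rw [hcast, Real.Gamma_nat_eq_factorial]
      have hnat : (j + p - 1).factorial ≤ (j + p) ^ p * j.factorial := by
        calc (j + p - 1).factorial ≤ (j + p).factorial :=
              Nat.factorial_le (by omega)
          _ ≤ (j + p) ^ p * j.factorial := aux_factorial_le_pow_mul j p
      rw [hgval]
      calc (((j + p - 1).factorial : ℕ) : ℝ) ≤ (((j + p) ^ p * j.factorial : ℕ) : ℝ) := by
            exact_mod_cast hnat
        _ = ((p:ℝ) + j) ^ p * (j.factorial : ℝ) := by push_cast; ring
    -- combine
    have hXpow : X ^ (α * (j:ℝ) - 2) = (X ^ α) ^ j / X ^ 2 := by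
      rw [Real.rpow_sub hXpos]
      congr 1
      · rw [Real.rpow_mul hXpos.le, Real.rpow_natCast]
      · rw [show (2:ℝ) = ((2:ℕ):ℝ) by norm_num, Real.rpow_natCast]
    have hfact_pos : (0:ℝ) < (j.factorial : ℝ) := by positivity
    have hDlow : (0:ℝ) < (j.factorial : ℝ) * (X ^ (α * (j:ℝ) - 2) / Real.exp X) := by
      positivity
    have hstep : B j ≤ (((p:ℝ) + j) ^ p * (j.factorial : ℝ)) * z ^ j /
        ((j.factorial : ℝ) * (X ^ (α * (j:ℝ) - 2) / Real.exp X)) := by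
      rw [hB]
      apply div_le_div₀ (by positivity)
      · exact mul_le_mul_of_nonneg_right hnum (by positivity)
      · exact hDlow
      · exact mul_le_mul_of_nonneg_left hGlow hfact_pos.le
    refine hstep.trans ?_
    rw [hXpow]
    have hXαj : (0:ℝ) < (X ^ α) ^ j := by positivity
    have heq : (((p:ℝ) + j) ^ p * (j.factorial : ℝ)) * z ^ j /
        ((j.factorial : ℝ) * ((X ^ α) ^ j / X ^ 2 / Real.exp X)) =
        C * (((p:ℝ) + j) ^ p * (z / X ^ α) ^ j) := by
      rw [hC, div_pow z (X ^ α) j]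
      field_simp
    rw [heq, hg]
    refine mul_le_mul_of_nonneg_left ?_ (by positivity)
    refine mul_le_mul_of_nonneg_left ?_ (by positivity)
    exact pow_le_pow_left₀ hq0 hq j
  -- big O
  have hBnonneg : ∀ j, 0 ≤ B j := by
    intro j
    rw [hB]
    have h1 : 0 < Real.Gamma ((p : ℝ) + (j : ℝ)) :=
      Real.Gamma_pos_of_pos (by positivity)
    have h2 : 0 < Real.Gamma (α * (j : ℝ) + (1 - α)) :=
      Real.Gamma_pos_of_pos (by nlinarith [Nat.cast_nonneg (α := ℝ) j])
    positivity
  have hgnonneg : ∀ j, 0 ≤ g j := fun j => by rw [hg]; positivity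
  have hO : (fun j : ℕ => B j) =O[Filter.atTop] g := by
    rw [Asymptotics.isBigO_iff]
    refine ⟨C, ?_⟩
    have hN : ∀ᶠ j : ℕ in Filter.atTop, (2:ℝ) ≤ α * j := by
      have := Filter.eventually_ge_atTop ⌈(2:ℝ)/α⌉₊
      filter_upwards [this] with j hj
      have h1 : (2:ℝ)/α ≤ (⌈(2:ℝ)/α⌉₊ : ℝ) := Nat.le_ceil _
      have h2 : ((⌈(2:ℝ)/α⌉₊ : ℕ) : ℝ) ≤ (j:ℝ) := by exact_mod_cast hj
      have h3 : (2:ℝ)/α ≤ (j:ℝ) := le_trans h1 h2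
      calc (2:ℝ) = α * ((2:ℝ)/α) := by field_simp
        _ ≤ α * j := mul_le_mul_of_nonneg_left h3 hα0.le
    filter_upwards [hN] with j hj
    rw [Real.norm_eq_abs, Real.norm_eq_abs, abs_of_nonneg (hBnonneg j),
      abs_of_nonneg (hgnonneg j)]
    exact hbound j hj
  exact summable_of_isBigO_nat hgsum hO

set_option maxHeartbeats 1000000 in
/-- For `α ∈ (0,1)`, `λ ≥ 0`, `ν > 0`, `S > 0`, `t > 0` and `p ≥ 1`, the
multi-index series `Σ_{k∈ℕ₊^p} (St^α)^{Σk_i−1} ν^{Σk_i−1} / Γ(α(Σk_i−1)+1)`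
converges and is bounded by `(St^α ν)⁻¹ E^p_{α,1−α}(St^α ν) < ∞`, where
`E^γ_{α,β}(z) = (1/Γ(γ)) Σ_{k≥0} Γ(γ+k) z^k/(k! Γ(αk+β))` is the Prabhakar
(three-parameter Mittag-Leffler) function. -/
theorem stmt_19 (α lam ν S t : ℝ) (hα0 : 0 < α) (hα1 : α < 1) (hlam : 0 ≤ lam)
    (hν : 0 < ν) (hS : 0 < S) (ht : 0 < t) (p : ℕ) (hp : 1 ≤ p) :
    Summable (fun k : Fin p → ℕ =>
      (S * t ^ α) ^ ((∑ i, (k i + 1)) - 1) * ν ^ ((∑ i, (k i + 1)) - 1) /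
        Real.Gamma (α * ((((∑ i, (k i + 1)) - 1 : ℕ) : ℝ)) + 1)) ∧
    (∑' k : Fin p → ℕ,
        (S * t ^ α) ^ ((∑ i, (k i + 1)) - 1) * ν ^ ((∑ i, (k i + 1)) - 1) /
          Real.Gamma (α * ((((∑ i, (k i + 1)) - 1 : ℕ) : ℝ)) + 1))
      < (S * t ^ α * ν)⁻¹ *
          ((1 / Real.Gamma (p : ℝ)) *
            ∑' k : ℕ, Real.Gamma ((p : ℝ) + (k : ℝ)) * (S * t ^ α * ν) ^ k /
              ((k.factorial : ℝ) * Real.Gamma (α * (k : ℝ) + (1 - α)))) := by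
  have htα : (0:ℝ) < t ^ α := Real.rpow_pos_of_pos ht α
  set z : ℝ := S * t ^ α * ν with hzdef
  have hz : 0 < z := by positivity
  set B : ℕ → ℝ := fun j => Real.Gamma ((p : ℝ) + (j : ℝ)) * z ^ j /
      ((j.factorial : ℝ) * Real.Gamma (α * (j : ℝ) + (1 - α))) with hBdef
  have hB : Summable B := aux_summable_B α z hα0 hα1 hz p hp
  have hppos : (0:ℝ) < (p:ℝ) := by exact_mod_cast Nat.pos_of_ne_zero (by omega)
  have hΓp_pos : 0 < Real.Gamma (p:ℝ) := Real.Gamma_pos_of_pos hppos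
  have hBnonneg : ∀ j, 0 ≤ B j := by
    intro j
    have hj0 : (0:ℝ) ≤ (j:ℝ) := Nat.cast_nonneg j
    have h1 : 0 < Real.Gamma ((p : ℝ) + (j : ℝ)) :=
      Real.Gamma_pos_of_pos (by linarith)
    have h2 : 0 < Real.Gamma (α * (j : ℝ) + (1 - α)) :=
      Real.Gamma_pos_of_pos (by nlinarith)
    rw [hBdef]
    positivity
  have hB0pos : 0 < B 0 := by
    rw [hBdef]
    simp only [Nat.cast_zero, mul_zero, zero_add, pow_zero, Nat.factorial_zero,
      Nat.cast_one, one_mul, mul_one]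
    have h1 : 0 < Real.Gamma ((p : ℝ) + 0) := Real.Gamma_pos_of_pos (by linarith)
    have h2 : 0 < Real.Gamma (1 - α) := Real.Gamma_pos_of_pos (by linarith)
    positivity
  set T : ℕ → ℝ := fun s => z ^ (s + p - 1) /
      Real.Gamma (α * ((s + p - 1 : ℕ) : ℝ) + 1) with hTdef
  have hT_nonneg : ∀ s, 0 ≤ T s := by
    intro s
    have hGpos : 0 < Real.Gamma (α * ((s + p - 1 : ℕ) : ℝ) + 1) :=
      Real.Gamma_pos_of_pos (by positivity)
    rw [hTdef]; positivity
  set FF : (Fin p → ℕ) → ℝ := fun k => T (∑ i, k i) with hFFdef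
  have hpt : ∀ k : Fin p → ℕ,
      (S * t ^ α) ^ ((∑ i, (k i + 1)) - 1) * ν ^ ((∑ i, (k i + 1)) - 1) /
        Real.Gamma (α * ((((∑ i, (k i + 1)) - 1 : ℕ) : ℝ)) + 1) = FF k := by
    intro k
    have hsum : ∑ i, (k i + 1) = (∑ i, k i) + p := by
      rw [Finset.sum_add_distrib]; simp
    rw [hFFdef, hTdef, hsum, ← mul_pow, ← hzdef]
  -- fibers
  haveI hfin : ∀ s : ℕ, Finite {k : Fin p → ℕ // ∑ i, k i = s} := by
    intro s
    exact Finite.of_equiv _ (Equiv.subtypeEquivRight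
      (fun k => by simp [Finset.mem_piAntidiag]) :
      {k : Fin p → ℕ // k ∈ Finset.piAntidiag Finset.univ s} ≃
        {k : Fin p → ℕ // ∑ i, k i = s})
  have hcard : ∀ s : ℕ, Nat.card {k : Fin p → ℕ // ∑ i, k i = s} = (p + s - 1).choose s := by
    intro s
    have h1 : Nat.card {k : Fin p → ℕ // ∑ i, k i = s} =
        Nat.card {k : Fin p → ℕ // k ∈ Finset.piAntidiag Finset.univ s} :=
      (Nat.card_congr (Equiv.subtypeEquivRight
        (fun k => by simp [Finset.mem_piAntidiag]))).symm
    rw [h1, Nat.card_eq_fintype_card, Fintype.card_coe, aux_card_piAntidiag]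
    simp
  have hfiber_tsum : ∀ s : ℕ,
      ∑' y : {k : Fin p → ℕ // ∑ i, k i = s}, FF (y : Fin p → ℕ) =
        ((p + s - 1).choose s : ℝ) * T s := by
    intro s
    have he : ∀ y : {k : Fin p → ℕ // ∑ i, k i = s}, FF (y : Fin p → ℕ) = T s := by
      intro y
      rw [hFFdef]
      simp only
      rw [y.2]
    rw [tsum_congr he, tsum_const, hcard s, nsmul_eq_mul]
  have hfiber_summable : ∀ s : ℕ,
      Summable (fun y : {k : Fin p → ℕ // ∑ i, k i = s} => FF (y : Fin p → ℕ)) :=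
    fun s => Summable.of_finite
  -- key bound
  have hkey : ∀ s : ℕ, ((p + s - 1).choose s : ℝ) * T s ≤
      z⁻¹ * (Real.Gamma (p:ℝ))⁻¹ * B (s + p) := by
    intro s
    have hGpos : 0 < Real.Gamma (α * ((s + p - 1 : ℕ) : ℝ) + 1) :=
      Real.Gamma_pos_of_pos (by positivity)
    have hGam1 : Real.Gamma ((p:ℝ) + ((s + p : ℕ) : ℝ)) = ((s + 2*p - 1).factorial : ℝ) := by
      have h : (p:ℝ) + ((s + p : ℕ) : ℝ) = ((s + 2*p - 1 : ℕ) : ℝ) + 1 := by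
        rw [Nat.cast_sub (by omega)]; push_cast; ring
      rw [h, Real.Gamma_nat_eq_factorial]
    have hGam2 : Real.Gamma (α * ((s + p : ℕ) : ℝ) + (1 - α)) =
        Real.Gamma (α * ((s + p - 1 : ℕ) : ℝ) + 1) := by
      congr 1
      rw [Nat.cast_sub (by omega : 1 ≤ s + p)]
      push_cast; ring
    have hGamp : Real.Gamma ((p:ℝ)) = ((p - 1).factorial : ℝ) := by
      have h : (p:ℝ) = ((p - 1 : ℕ) : ℝ) + 1 := by
        rw [Nat.cast_sub hp]; push_cast; ring
      rw [h, Real.Gamma_nat_eq_factorial]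
    have hzpow : z ^ (s + p) = z ^ (s + p - 1) * z := by
      rw [← pow_succ]; congr 1; omega
    have hchoose : ((p + s - 1).choose s : ℝ) *
        (((p-1).factorial : ℝ) * ((s+p).factorial : ℝ)) ≤ ((s + 2*p - 1).factorial : ℝ) := by
      have h1 : (p + s - 1).choose s ≤ (s + 2*p - 1).choose (p - 1) := by
        have hsym : (p + s - 1).choose s = (p + s - 1).choose (p - 1) := by
          rw [← Nat.choose_symm (by omega : p - 1 ≤ p + s - 1)]
          congr 1; omega
        rw [hsym]
        exact Nat.choose_le_choose _ (by omega)
      have h2 : (s + 2*p - 1).choose (p-1) * (p-1).factorial * (s + p).factorial =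
          (s + 2*p - 1).factorial := by
        have h3 := Nat.choose_mul_factorial_mul_factorial (by omega : p - 1 ≤ s + 2*p - 1)
        rw [show s + 2*p - 1 - (p - 1) = s + p by omega] at h3
        exact h3
      have h4 : (p + s - 1).choose s * ((p-1).factorial * (s+p).factorial) ≤
          (s + 2*p - 1).factorial := by
        calc (p + s - 1).choose s * ((p-1).factorial * (s+p).factorial)
            ≤ (s + 2*p - 1).choose (p-1) * ((p-1).factorial * (s+p).factorial) :=
              Nat.mul_le_mul_right _ h1
          _ = (s + 2*p - 1).factorial := by rw [← h2]; ring
      exact_mod_cast h4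
    have hrhs : z⁻¹ * (Real.Gamma (p:ℝ))⁻¹ * B (s + p) =
        (((s + 2*p - 1).factorial : ℝ) / (((p-1).factorial : ℝ) * ((s+p).factorial : ℝ))) *
          (z ^ (s + p - 1) / Real.Gamma (α * ((s + p - 1 : ℕ) : ℝ) + 1)) := by
      have hfp : ((p-1).factorial : ℝ) ≠ 0 := by positivity
      have hfsp : ((s+p).factorial : ℝ) ≠ 0 := by positivity
      have habs : ∀ zz Pf A m F G : ℝ, zz ≠ 0 → Pf ≠ 0 → F ≠ 0 → G ≠ 0 →
          zz⁻¹ * Pf⁻¹ * (A * (m * zz) / (F * G)) = A / (Pf * F) * (m / G) := by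
        intros zz Pf A m F G h1 h2 h3 h4
        field_simp
      simp only [hBdef]
      rw [hGam1, hGam2, hGamp, hzpow]
      exact habs z _ _ _ _ _ hz.ne' hfp hfsp hGpos.ne'
    rw [hrhs, hTdef]
    refine mul_le_mul_of_nonneg_right ?_ (by positivity)
    rw [le_div_iff₀ (by positivity)]
    exact hchoose
  -- summability of fiber sums
  have hshift : Summable (fun s => B (s + p)) := (summable_nat_add_iff p).2 hB
  have hDsum : Summable (fun s => z⁻¹ * (Real.Gamma (p:ℝ))⁻¹ * B (s + p)) :=
    hshift.mul_left _
  have hc_nonneg : ∀ s, 0 ≤ ((p + s - 1).choose s : ℝ) * T s :=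
    fun s => mul_nonneg (Nat.cast_nonneg _) (hT_nonneg s)
  have hcsum : Summable (fun s => ((p + s - 1).choose s : ℝ) * T s) :=
    Summable.of_nonneg_of_le hc_nonneg hkey hDsum
  -- sigma
  set e := Equiv.sigmaFiberEquiv (fun k : Fin p → ℕ => ∑ i, k i) with hedef
  have hsig : Summable (FF ∘ e) := by
    refine (summable_sigma_of_nonneg ?_).2 ⟨?_, ?_⟩
    · intro x
      exact hT_nonneg _
    · intro s
      exact hfiber_summable s
    · exact (summable_congr fun s => hfiber_tsum s).2 hcsum
  have hFsum : Summable FF := e.summable_iff.1 hsig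
  constructor
  · exact hFsum.congr fun k => (hpt k).symm
  · have htsum : ∑' k : Fin p → ℕ, FF k = ∑' s, ((p + s - 1).choose s : ℝ) * T s := by
      rw [← Equiv.tsum_eq e FF]
      rw [Summable.tsum_sigma (f := fun x : (Σ s : ℕ, {k : Fin p → ℕ // ∑ i, k i = s}) =>
        FF (e x)) hsig]
      exact tsum_congr fun s => hfiber_tsum s
    have hconst_pos : 0 < z⁻¹ * (Real.Gamma (p:ℝ))⁻¹ := by positivity
    have hsplit := Summable.sum_add_tsum_nat_add (f := B) p hB
    have hpos : 0 < ∑ i ∈ range p, B i :=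
      Finset.sum_pos' (fun i _ => hBnonneg i) ⟨0, Finset.mem_range.2 (by omega), hB0pos⟩
    have hlt : ∑' s, B (s + p) < ∑' j, B j := by linarith
    calc ∑' k : Fin p → ℕ,
        (S * t ^ α) ^ ((∑ i, (k i + 1)) - 1) * ν ^ ((∑ i, (k i + 1)) - 1) /
          Real.Gamma (α * ((((∑ i, (k i + 1)) - 1 : ℕ) : ℝ)) + 1)
        = ∑' k : Fin p → ℕ, FF k := tsum_congr hpt
      _ = ∑' s, ((p + s - 1).choose s : ℝ) * T s := htsum
      _ ≤ ∑' s, z⁻¹ * (Real.Gamma (p:ℝ))⁻¹ * B (s + p) :=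
          Summable.tsum_le_tsum hkey hcsum hDsum
      _ = z⁻¹ * (Real.Gamma (p:ℝ))⁻¹ * ∑' s, B (s + p) := tsum_mul_left
      _ < z⁻¹ * (Real.Gamma (p:ℝ))⁻¹ * ∑' j, B j :=
          mul_lt_mul_of_pos_left hlt hconst_pos
      _ = z⁻¹ * ((1 / Real.Gamma (p:ℝ)) * ∑' j, B j) := by
          rw [one_div]; ring
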